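/- Let (a_k)_{k≥0} be a sequence of nonnegative real numbers such that for every k ≥ 1, a_k ≤ 2^{k·2^{−k}} · a_{k−1}^{1 − 2^{−k}}. Then for every n ≥ 0, a_n ≤ 2^{Σ_{k=1}^n k·2^{−k}} · a₀^{∏_{k=1}^n (1 − 2^{−k})}. In particular, if a₀ ≤ 1 then a_n ≤ 4 for all n ≥ 0. -/
import Mathlib

lemma moser_sum_le (n : ℕ) :
    ∑ k ∈ Finset.Icc 1 n, (k : ℝ) * (2 : ℝ) ^ (-(k : ℝ)) ≤ 2 := by
  have h : ∀ n : ℕ, ∑ k ∈ Finset.Icc 1 n, (k : ℝ) * (2 : ℝ) ^ (-(k : ℝ))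
      = 2 - ((n : ℝ) + 2) * (2 : ℝ) ^ (-(n : ℝ)) := by
    intro n
    induction n with
    | zero => simp
    | succ m ih =>
      rw [Finset.sum_Icc_succ_top (by omega : 1 ≤ m + 1), ih]
      have h1 : (2 : ℝ) ^ (-(((m + 1 : ℕ)) : ℝ)) = (2 : ℝ) ^ (-(m : ℝ)) / 2 := by
        rw [show (-(((m + 1 : ℕ)) : ℝ)) = -(m : ℝ) + (-1) by push_cast; ring,
          Real.rpow_add (by norm_num), Real.rpow_neg_one]
        ring
      rw [h1]
      push_cast
      ring
  rw [h]
  have h2 : (0 : ℝ) ≤ ((n : ℝ) + 2) * (2 : ℝ) ^ (-(n : ℝ)) := by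
    positivity
  linarith

lemma moser_term_mem (n k : ℕ) (_hk : k ∈ Finset.Icc 1 n) :
    (0 : ℝ) ≤ 1 - (2 : ℝ) ^ (-(k : ℝ)) := by
  
  have : (2 : ℝ) ^ (-(k : ℝ)) ≤ (2 : ℝ) ^ (0 : ℝ) := by
    apply Real.rpow_le_rpow_of_exponent_le (by norm_num)
    simp
  simp only [Real.rpow_zero] at this
  linarith

theorem moser_iteration_sequence (a : ℕ → ℝ) (ha : ∀ k, 0 ≤ a k)
    (hrec : ∀ k : ℕ, 1 ≤ k →
      a k ≤ (2 : ℝ) ^ ((k : ℝ) * (2 : ℝ) ^ (-(k : ℝ))) *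
        a (k - 1) ^ (1 - (2 : ℝ) ^ (-(k : ℝ)))) :
    (∀ n : ℕ, a n ≤ (2 : ℝ) ^ (∑ k ∈ Finset.Icc 1 n, (k : ℝ) * (2 : ℝ) ^ (-(k : ℝ))) *
        a 0 ^ (∏ k ∈ Finset.Icc 1 n, (1 - (2 : ℝ) ^ (-(k : ℝ))))) ∧
      (a 0 ≤ 1 → ∀ n : ℕ, a n ≤ 4) := by
  have hsum_nonneg : ∀ n : ℕ,
      (0 : ℝ) ≤ ∑ k ∈ Finset.Icc 1 n, (k : ℝ) * (2 : ℝ) ^ (-(k : ℝ)) := by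
    intro n
    apply Finset.sum_nonneg
    intro k _
    positivity
  have main : ∀ n : ℕ, a n ≤ (2 : ℝ) ^ (∑ k ∈ Finset.Icc 1 n, (k : ℝ) * (2 : ℝ) ^ (-(k : ℝ))) *
      a 0 ^ (∏ k ∈ Finset.Icc 1 n, (1 - (2 : ℝ) ^ (-(k : ℝ)))) := by
    intro n
    induction n with
    | zero => simp
    | succ m ih =>
      set S := ∑ k ∈ Finset.Icc 1 m, (k : ℝ) * (2 : ℝ) ^ (-(k : ℝ)) with hS
      set P := ∏ k ∈ Finset.Icc 1 m, (1 - (2 : ℝ) ^ (-(k : ℝ))) with hP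
      set c := ((m : ℝ) + 1) * (2 : ℝ) ^ (-((m : ℝ) + 1)) with hc
      set e := 1 - (2 : ℝ) ^ (-((m : ℝ) + 1)) with he
      have he0 : 0 ≤ e := by
        have : (2 : ℝ) ^ (-((m : ℝ) + 1)) ≤ (2 : ℝ) ^ (0 : ℝ) := by
          apply Real.rpow_le_rpow_of_exponent_le (by norm_num)
          have : (0:ℝ) ≤ (m:ℝ) := Nat.cast_nonneg m
          linarith
        simp only [Real.rpow_zero] at this
        linarith
      have he1 : e ≤ 1 := by
        have : (0 : ℝ) < (2 : ℝ) ^ (-((m : ℝ) + 1)) := Real.rpow_pos_of_pos (by norm_num) _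
        simp only [he]; linarith
      have hcast : (((m + 1 : ℕ) : ℝ)) = (m : ℝ) + 1 := by push_cast; ring
      have hrec' : a (m + 1) ≤ (2 : ℝ) ^ c * a m ^ e := by
        have := hrec (m + 1) (by omega)
        simpa [hcast, hc, he] using this
      have h1 : a m ^ e ≤ ((2 : ℝ) ^ S * a 0 ^ P) ^ e :=
        Real.rpow_le_rpow (ha m) ih he0
      have h2 : ((2 : ℝ) ^ S * a 0 ^ P) ^ e = (2 : ℝ) ^ (S * e) * a 0 ^ (P * e) := by
        rw [Real.mul_rpow (by positivity) (Real.rpow_nonneg (ha 0) _),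
          ← Real.rpow_mul (by norm_num : (0:ℝ) ≤ 2), ← Real.rpow_mul (ha 0)]
      have h3 : (2 : ℝ) ^ (S * e) ≤ (2 : ℝ) ^ S := by
        apply Real.rpow_le_rpow_of_exponent_le (by norm_num)
        nlinarith [hsum_nonneg m]
      calc a (m + 1) ≤ (2 : ℝ) ^ c * a m ^ e := hrec'
        _ ≤ (2 : ℝ) ^ c * ((2 : ℝ) ^ (S * e) * a 0 ^ (P * e)) := by
            rw [← h2]
            apply mul_le_mul_of_nonneg_left (h2 ▸ h1) (by positivity)
        _ ≤ (2 : ℝ) ^ c * ((2 : ℝ) ^ S * a 0 ^ (P * e)) := by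
            apply mul_le_mul_of_nonneg_left _ (by positivity)
            exact mul_le_mul_of_nonneg_right h3 (Real.rpow_nonneg (ha 0) _)
        _ = (2 : ℝ) ^ (S + c) * a 0 ^ (P * e) := by
            rw [← mul_assoc, ← Real.rpow_add (by norm_num : (0:ℝ) < 2), add_comm c S]
        _ = _ := by
            rw [Finset.sum_Icc_succ_top (by omega : 1 ≤ m + 1),
              Finset.prod_Icc_succ_top (by omega : 1 ≤ m + 1)]
            simp [hcast, hS, hP, hc, he]
  refine ⟨main, fun ha0 n => ?_⟩
  have hP0 : (0 : ℝ) ≤ ∏ k ∈ Finset.Icc 1 n, (1 - (2 : ℝ) ^ (-(k : ℝ))) :=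
    Finset.prod_nonneg (moser_term_mem n)
  have h1 : a 0 ^ (∏ k ∈ Finset.Icc 1 n, (1 - (2 : ℝ) ^ (-(k : ℝ)))) ≤ 1 :=
    Real.rpow_le_one (ha 0) ha0 hP0
  have h2 : (2 : ℝ) ^ (∑ k ∈ Finset.Icc 1 n, (k : ℝ) * (2 : ℝ) ^ (-(k : ℝ))) ≤ 4 := by
    have : (2 : ℝ) ^ (∑ k ∈ Finset.Icc 1 n, (k : ℝ) * (2 : ℝ) ^ (-(k : ℝ)))
        ≤ (2 : ℝ) ^ (2 : ℝ) :=
      Real.rpow_le_rpow_of_exponent_le (by norm_num) (moser_sum_le n)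
    have h4 : (2 : ℝ) ^ (2 : ℝ) = 4 := by
      rw [show (2:ℝ) = ((2:ℕ):ℝ) by norm_num, Real.rpow_natCast]; norm_num
    linarith
  calc a n ≤ _ := main n
    _ ≤ 4 * 1 := by
        apply mul_le_mul h2 h1 (Real.rpow_nonneg (ha 0) _) (by norm_num)
    _ = 4 := by ring
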